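/- Let h₀ > 0, let f₀ be a real number, and let n be a real number with n ≠ 2. Suppose G : (0,∞) → ℝ is differentiable and satisfies 2·h₀·xⁿ·G′(x) + n·h₀·x^(n−1)·G(x) = f₀ for all x > 0. Then there exists a real constant c such that G(x) = (c/√h₀)·x^(−n/2) + (f₀/h₀)·x^(1−n)/(2−n) for all x > 0. -/

import Mathlib

theorem stmt_4 (h₀ f₀ n : ℝ) (hh₀ : 0 < h₀) (hn : n ≠ 2)
    (G G' : ℝ → ℝ)
    (hdiff : ∀ x : ℝ, 0 < x → HasDerivAt G (G' x) x)
    (hode : ∀ x : ℝ, 0 < x →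
      2 * h₀ * x ^ n * G' x + n * h₀ * x ^ (n - 1) * G x = f₀) :
    ∃ c : ℝ, ∀ x : ℝ, 0 < x →
      G x = (c / Real.sqrt h₀) * x ^ (-n / 2) + (f₀ / h₀) * x ^ (1 - n) / (2 - n) := by
  have h2n : (2 : ℝ) - n ≠ 0 := sub_ne_zero.2 (Ne.symm hn)
  have hh0 : h₀ ≠ 0 := ne_of_gt hh₀
  set K : ℝ := f₀ / (h₀ * (2 - n)) with hK
  set φ : ℝ → ℝ := fun x => x ^ (n/2) * G x - K * x ^ ((2-n)/2) with hφ
  have hderiv : ∀ x ∈ Set.Ioi (0:ℝ), HasDerivAt φ 0 x := by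
    intro x hx
    have hx : (0:ℝ) < x := hx
    have hx0 : x ≠ 0 := ne_of_gt hx
    have h1 : HasDerivAt (fun y : ℝ => y ^ (n/2)) ((n/2) * x ^ (n/2 - 1)) x :=
      Real.hasDerivAt_rpow_const (Or.inl hx0)
    have h2 : HasDerivAt (fun y : ℝ => y ^ ((2-n)/2)) (((2-n)/2) * x ^ ((2-n)/2 - 1)) x :=
      Real.hasDerivAt_rpow_const (Or.inl hx0)
    have h3 := (h1.mul (hdiff x hx)).sub (h2.const_mul K)
    convert h3 using 1
    case e'_4 => rfl
    case e'_5 => rfl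
    case e'_8 => rfl
    have key := hode x hx
    have e1 : x ^ (n/2 - 1) = x ^ (n-1) * x ^ (-(n/2)) := by
      rw [← Real.rpow_add hx]; ring_nf
    have e2 : x ^ (n/2) = x ^ n * x ^ (-(n/2)) := by
      rw [← Real.rpow_add hx]; ring_nf
    have e3 : x ^ ((2-n)/2 - 1) = x ^ (-(n/2)) := by
      rw [show (2-n)/2 - 1 = -(n/2) by ring]
    rw [e1, e2, e3, hK]
    field_simp
    linear_combination (-x ^ (-(n/2))) * key
  have hdiffOn : DifferentiableOn ℝ φ (Set.Ioi (0:ℝ)) :=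
    fun x hx => ((hderiv x hx).differentiableAt).differentiableWithinAt
  have hfd : ∀ x ∈ Set.Ioi (0:ℝ), fderivWithin ℝ φ (Set.Ioi (0:ℝ)) x = 0 := by
    intro x hx
    rw [fderivWithin_of_isOpen isOpen_Ioi hx, (hderiv x hx).hasFDerivAt.fderiv]
    ext; simp
  have hconst : ∀ x ∈ Set.Ioi (0:ℝ), φ x = φ 1 := fun x hx =>
    (convex_Ioi 0).is_const_of_fderivWithin_eq_zero hdiffOn hfd hx (by norm_num)
  refine ⟨Real.sqrt h₀ * φ 1, fun x hx => ?_⟩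
  have hs : Real.sqrt h₀ ≠ 0 := ne_of_gt (Real.sqrt_pos.2 hh₀)
  have hc : Real.sqrt h₀ * φ 1 / Real.sqrt h₀ = φ 1 := by field_simp
  rw [hc]
  have h4 := hconst x hx
  have hx0 : x ≠ 0 := ne_of_gt hx
  have hxp : (0:ℝ) < x ^ (n/2) := Real.rpow_pos_of_pos hx _
  have e4 : x ^ ((2-n)/2) * x ^ (-n/2) = x ^ (1-n) := by
    rw [← Real.rpow_add hx]; ring_nf
  have e5 : x ^ (n/2) * x ^ (-n/2) = 1 := by
    rw [← Real.rpow_add hx, show n/2 + -n/2 = 0 by ring, Real.rpow_zero]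
  -- from φ x = φ 1 solve for G x
  have hGx : G x = φ 1 * x ^ (-n/2) + K * x ^ (1-n) := by
    have : x ^ (n/2) * G x = φ 1 + K * x ^ ((2-n)/2) := by
      rw [← h4]; simp [hφ]
    have h6 : x ^ (n/2) * G x * x ^ (-n/2) = (φ 1 + K * x ^ ((2-n)/2)) * x ^ (-n/2) := by
      rw [this]
    calc G x = x ^ (n/2) * G x * x ^ (-n/2) := by
            rw [mul_comm (x ^ (n/2)) (G x), mul_assoc, e5, mul_one]
      _ = (φ 1 + K * x ^ ((2-n)/2)) * x ^ (-n/2) := h6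
      _ = φ 1 * x ^ (-n/2) + K * (x ^ ((2-n)/2) * x ^ (-n/2)) := by ring
      _ = φ 1 * x ^ (-n/2) + K * x ^ (1-n) := by rw [e4]
  rw [hGx, hK]
  field_simp
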